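/- For every i and every index j with 0 ≤ j ≤ 2^i, the numerator of the j-th entry of SB (i+1) equals the numerator of the j-th entry of SB i, and the denominator of the j-th entry of SB (i+1) equals the numerator of the j-th entry of SB i plus the denominator of the j-th entry of SB i. That is, num(SB (i+1) [j]) = num(SB i [j]) and den(SB (i+1) [j]) = num(SB i [j]) + den(SB i [j]). -/
import Mathlib

/-- The mediant of two rationals `p` and `q`: `(num p + num q) / (den p + den q)`. -/
def mediant (p q : ℚ) : ℚ := ((p.num + q.num : ℤ) : ℚ) / ((p.den + q.den : ℕ) : ℚ)

/-- Insert between every pair of consecutive entries of a list their mediant. -/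
def insertMediants : List ℚ → List ℚ
  | [] => []
  | [p] => [p]
  | p :: q :: rest => p :: mediant p q :: insertMediants (q :: rest)

/-- The Stern-Brocot half-sequences: `SB 0 = [0/1, 1/1]`, and each successive
sequence is obtained by inserting mediants between consecutive entries. -/
def SB : ℕ → List ℚ
  | 0 => [0, 1]
  | i + 1 => insertMediants (SB i)

lemma insertMediants_length (p : ℚ) (l : List ℚ) :
    (insertMediants (p :: l)).length = 2 * l.length + 1 := by
  induction l generalizing p with
  | nil => simp [insertMediants]
  | cons q rest ih => simp [insertMediants, ih q]; ring

lemma SB_length (i : ℕ) : (SB i).length = 2 ^ i + 1 := by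
  induction i with
  | zero => simp [SB]
  | succ i ih =>
    obtain ⟨p, l, hl⟩ : ∃ p l, SB i = p :: l := by
      cases h : SB i with
      | nil => rw [h] at ih; simp at ih
      | cons a b => exact ⟨a, b, rfl⟩
    have : l.length = 2 ^ i := by rw [hl] at ih; simpa using ih
    show (insertMediants (SB i)).length = _
    rw [hl, insertMediants_length, this]
    ring

lemma insertMediants_getD_even (l : List ℚ) :
    ∀ k, (insertMediants l).getD (2 * k) 0 = l.getD k 0 := by
  induction l using insertMediants.induct with
  | case1 => intro k; simp [insertMediants]
  | case2 p =>
    intro k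
    match k with
    | 0 => simp [insertMediants]
    | m + 1 =>
      rw [insertMediants]
      rw [List.getD_eq_default _ _ (by simp; omega), List.getD_eq_default _ _ (by simp)]
  | case3 p q rest ih =>
    intro k
    match k with
    | 0 => simp [insertMediants]
    | m + 1 =>
      have h2 : 2 * (m + 1) = 2 * m + 1 + 1 := by ring
      rw [insertMediants, h2]
      simpa using ih m

lemma insertMediants_getD_odd (l : List ℚ) :
    ∀ k, k + 1 < l.length →
      (insertMediants l).getD (2 * k + 1) 0 = mediant (l.getD k 0) (l.getD (k + 1) 0) := by
  induction l using insertMediants.induct with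
  | case1 => intro k hk; simp at hk
  | case2 p => intro k hk; simp at hk
  | case3 p q rest ih =>
    intro k hk
    match k with
    | 0 => simp [insertMediants]
    | m + 1 =>
      have h2 : 2 * (m + 1) + 1 = 2 * m + 1 + 1 + 1 := by ring
      rw [insertMediants, h2]
      have hm : m + 1 < (q :: rest).length := by simpa using Nat.lt_of_succ_lt_succ hk
      simpa using ih m hm

lemma mediant_num_den {p q : ℚ} (h : q.num * p.den - p.num * q.den = 1) :
    (mediant p q).num = p.num + q.num ∧
      ((mediant p q).den : ℤ) = (p.den : ℤ) + q.den := by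
  have hb0 : (0 : ℤ) < (p.den : ℤ) + q.den := by positivity
  have hcop : IsCoprime (p.num + q.num) ((p.den : ℤ) + q.den) := by
    refine ⟨-q.den, q.num, ?_⟩
    linarith
  have hcop' : Nat.Coprime (p.num + q.num).natAbs ((p.den : ℤ) + q.den).natAbs :=
    Int.isCoprime_iff_gcd_eq_one.mp hcop
  have hm : mediant p q = (((p.num + q.num : ℤ) : ℚ)) / (((p.den : ℤ) + q.den : ℤ) : ℚ) := by
    rw [mediant]; push_cast; ring_nf
  rw [hm]
  exact ⟨Rat.num_div_eq_of_coprime hb0 hcop', Rat.den_div_eq_of_coprime hb0 hcop'⟩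

lemma SB_det : ∀ i k, k + 1 ≤ 2 ^ i →
    ((SB i).getD (k + 1) 0).num * ((SB i).getD k 0).den
      - ((SB i).getD k 0).num * ((SB i).getD (k + 1) 0).den = 1 := by
  intro i
  induction i with
  | zero =>
    intro k hk
    have : k = 0 := by omega
    subst this
    simp [SB]
  | succ i ih =>
    intro k hk
    have hSB : SB (i + 1) = insertMediants (SB i) := rfl
    rcases Nat.even_or_odd k with ⟨m, hm⟩ | ⟨m, hm⟩
    · subst hm
      have hmle : m + 1 ≤ 2 ^ i := by
        have := Nat.pow_succ 2 i ▸ hk; omega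
      have hlen : m + 1 < (SB i).length := by rw [SB_length]; omega
      have he : (SB (i+1)).getD (m + m) 0 = (SB i).getD m 0 := by
        rw [hSB, show m + m = 2 * m by ring, insertMediants_getD_even]
      have ho : (SB (i+1)).getD (m + m + 1) 0
          = mediant ((SB i).getD m 0) ((SB i).getD (m+1) 0) := by
        rw [hSB, show m + m + 1 = 2 * m + 1 by ring]
        exact insertMediants_getD_odd _ m hlen
      rw [he, ho]
      obtain ⟨hn, hd⟩ := mediant_num_den (ih m hmle)
      have := ih m hmle
      rw [hn, hd]
      linarith
    · subst hm
      have hmle : m + 1 ≤ 2 ^ i := by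
        have := Nat.pow_succ 2 i ▸ hk; omega
      have hlen : m + 1 < (SB i).length := by rw [SB_length]; omega
      have he : (SB (i+1)).getD (2 * m + 1 + 1) 0 = (SB i).getD (m + 1) 0 := by
        rw [hSB, show 2 * m + 1 + 1 = 2 * (m + 1) by ring, insertMediants_getD_even]
      have ho : (SB (i+1)).getD (2 * m + 1) 0
          = mediant ((SB i).getD m 0) ((SB i).getD (m+1) 0) := by
        rw [hSB]
        exact insertMediants_getD_odd _ m hlen
      rw [he, ho]
      obtain ⟨hn, hd⟩ := mediant_num_den (ih m hmle)
      have := ih m hmle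
      rw [hn, hd]
      linarith

/-- For `0 ≤ j ≤ 2 ^ i`: the numerator of the `j`-th entry of `SB (i+1)` equals the
numerator of the `j`-th entry of `SB i`, and its denominator equals the numerator plus
the denominator of the `j`-th entry of `SB i`. -/
theorem sternBrocot_num_den_recursion (i j : ℕ) (hj : j ≤ 2 ^ i) :
    ((SB (i + 1)).getD j 0).num = ((SB i).getD j 0).num ∧
    (((SB (i + 1)).getD j 0).den : ℤ) =
      ((SB i).getD j 0).num + (((SB i).getD j 0).den : ℤ) := by
  induction i generalizing j with
  | zero =>
    interval_cases j <;> norm_num [SB, insertMediants, mediant]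
  | succ i ih =>
    have hS1 : SB (i + 1) = insertMediants (SB i) := rfl
    have hS2 : SB (i + 2) = insertMediants (SB (i + 1)) := rfl
    rcases Nat.even_or_odd j with ⟨k, hk⟩ | ⟨k, hk⟩
    · subst hk
      have hkle : k ≤ 2 ^ i := by
        have := Nat.pow_succ 2 i ▸ hj; omega
      have h1 : (SB (i + 2)).getD (k + k) 0 = (SB (i+1)).getD k 0 := by
        rw [hS2, show k + k = 2 * k by ring, insertMediants_getD_even]
      have h2 : (SB (i + 1)).getD (k + k) 0 = (SB i).getD k 0 := by
        rw [hS1, show k + k = 2 * k by ring, insertMediants_getD_even]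
      rw [h1, h2]
      exact ih k hkle
    · subst hk
      have hkle : k + 1 ≤ 2 ^ i := by
        have := Nat.pow_succ 2 i ▸ hj; omega
      have hlen1 : k + 1 < (SB i).length := by rw [SB_length]; omega
      have hlen2 : k + 1 < (SB (i+1)).length := by
        rw [SB_length]
        have : 2 ^ i ≤ 2 ^ (i+1) := Nat.pow_le_pow_right (by norm_num) (by omega)
        omega
      have h1 : (SB (i + 2)).getD (2 * k + 1) 0
          = mediant ((SB (i+1)).getD k 0) ((SB (i+1)).getD (k+1) 0) := by
        rw [hS2]; exact insertMediants_getD_odd _ k hlen2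
      have h2 : (SB (i + 1)).getD (2 * k + 1) 0
          = mediant ((SB i).getD k 0) ((SB i).getD (k+1) 0) := by
        rw [hS1]; exact insertMediants_getD_odd _ k hlen1
      rw [h1, h2]
      obtain ⟨hn1, hd1⟩ := mediant_num_den (SB_det (i+1) k (by
        have : 2 ^ i ≤ 2 ^ (i+1) := Nat.pow_le_pow_right (by norm_num) (by omega)
        omega))
      obtain ⟨hn2, hd2⟩ := mediant_num_den (SB_det i k hkle)
      obtain ⟨ha1, ha2⟩ := ih k (by omega)
      obtain ⟨hb1, hb2⟩ := ih (k+1) hkle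
      rw [hn1, hd1, hn2, hd2]
      constructor <;> linarith
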